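/- Let f : [0,1] → ℂ be continuous. Then for every ε > 0 there exists δ > 0 such that for every C*-algebra A and all x, y ∈ A with 0 ≤ x ≤ 1, ‖y‖ ≤ 1, and ‖xy - yx‖ < δ, one has ‖f(x)y - y f(x)‖ < ε. -/

import Mathlib

lemma comm_pow_bound {A : Type*} [NormedRing A] (x y : A) (hx : ‖x‖ ≤ 1)
    (h1 : ‖(1 : A)‖ ≤ 1) (n : ℕ) :
    ‖x ^ n * y - y * x ^ n‖ ≤ n * ‖x * y - y * x‖ := by
  induction n with
  | zero => simp
  | succ n ih =>
    have hxn : ‖x ^ n‖ ≤ 1 := by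
      cases n with
      | zero => simpa using h1
      | succ m =>
        exact (norm_pow_le' x (Nat.succ_pos m)).trans (pow_le_one₀ (norm_nonneg x) hx)
    have hid : x ^ (n + 1) * y - y * x ^ (n + 1)
        = x ^ n * (x * y - y * x) + (x ^ n * y - y * x ^ n) * x := by
      noncomm_ring
    calc ‖x ^ (n + 1) * y - y * x ^ (n + 1)‖
        ≤ ‖x ^ n * (x * y - y * x)‖ + ‖(x ^ n * y - y * x ^ n) * x‖ := by
          rw [hid]; exact norm_add_le _ _
      _ ≤ ‖x ^ n‖ * ‖x * y - y * x‖ + ‖x ^ n * y - y * x ^ n‖ * ‖x‖ := by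
          gcongr <;> exact norm_mul_le _ _
      _ ≤ 1 * ‖x * y - y * x‖ + (n * ‖x * y - y * x‖) * 1 :=
          add_le_add (mul_le_mul_of_nonneg_right hxn (norm_nonneg _))
            (mul_le_mul ih hx (norm_nonneg _) (by positivity))
      _ = (n + 1 : ℕ) * ‖x * y - y * x‖ := by push_cast; ring

open Polynomial in
lemma comm_aeval_bound {A : Type*} [NormedRing A] [NormedAlgebra ℂ A] (q : ℂ[X]) (x y : A)
    (hx : ‖x‖ ≤ 1) (h1 : ‖(1 : A)‖ ≤ 1) :
    ‖(aeval x q) * y - y * aeval x q‖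
      ≤ (∑ i ∈ Finset.range (q.natDegree + 1), ‖q.coeff i‖ * i) * ‖x * y - y * x‖ := by
  rw [aeval_eq_sum_range]
  have hsum : (∑ i ∈ Finset.range (q.natDegree + 1), q.coeff i • x ^ i) * y
       - y * (∑ i ∈ Finset.range (q.natDegree + 1), q.coeff i • x ^ i)
       = ∑ i ∈ Finset.range (q.natDegree + 1), q.coeff i • (x ^ i * y - y * x ^ i) := by
    rw [Finset.sum_mul, Finset.mul_sum, ← Finset.sum_sub_distrib]
    refine Finset.sum_congr rfl fun i _ => ?_
    rw [smul_mul_assoc, mul_smul_comm, smul_sub]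
  rw [hsum]
  refine (norm_sum_le _ _).trans ?_
  rw [Finset.sum_mul]
  refine Finset.sum_le_sum fun i _ => ?_
  rw [norm_smul, mul_assoc]
  exact mul_le_mul_of_nonneg_left (comm_pow_bound x y hx h1 i) (norm_nonneg _)

open Pointwise in
/-- For every continuous `f : [0,1] → ℂ` and every `ε > 0` there is `δ > 0`, depending
only on `f` and `ε`, such that in any (unital) C*-algebra `A`, whenever `0 ≤ x ≤ 1`,
`‖y‖ ≤ 1` and `‖xy - yx‖ < δ`, one has `‖f(x) y - y f(x)‖ < ε`.  Here `f(x)` is the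
continuous functional calculus of the normal element `x`. -/
theorem exists_delta_commutator_cfc (f : ℂ → ℂ)
    (hf : ContinuousOn f (Complex.ofReal '' Set.Icc (0 : ℝ) 1)) :
    ∀ ε : ℝ, 0 < ε → ∃ δ : ℝ, 0 < δ ∧
      ∀ (A : Type) [CStarAlgebra A] [PartialOrder A] [StarOrderedRing A],
        ∀ x y : A, 0 ≤ x → x ≤ 1 → ‖y‖ ≤ 1 → ‖x * y - y * x‖ < δ →
          ‖cfc f x * y - y * cfc f x‖ < ε := by
  intro ε hε
  -- approximate real and imaginary parts of `f` on `[0,1]` by real polynomials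
  have hcoe : ContinuousOn (fun r : ℝ => f r) (Set.Icc 0 1) :=
    hf.comp Complex.continuous_ofReal.continuousOn (fun r hr => ⟨r, hr, rfl⟩)
  obtain ⟨p₁, hp₁⟩ := exists_polynomial_near_of_continuousOn 0 1 (fun r => (f r).re)
    (Complex.continuous_re.comp_continuousOn hcoe) (ε / 8) (by positivity)
  obtain ⟨p₂, hp₂⟩ := exists_polynomial_near_of_continuousOn 0 1 (fun r => (f r).im)
    (Complex.continuous_im.comp_continuousOn hcoe) (ε / 8) (by positivity)
  set q : Polynomial ℂ :=
    p₁.map (algebraMap ℝ ℂ) + Polynomial.C Complex.I * p₂.map (algebraMap ℝ ℂ) with hq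
  set C : ℝ := ∑ i ∈ Finset.range (q.natDegree + 1), ‖q.coeff i‖ * i with hCdef
  have hC : 0 ≤ C := Finset.sum_nonneg fun i _ => by positivity
  refine ⟨ε / (2 * (C + 1)), by positivity, ?_⟩
  intro A _ _ _ x y hx0 hx1 hy hxy
  have hsa : IsSelfAdjoint x := hx0.isSelfAdjoint
  have hnorm : IsStarNormal x := hsa.isStarNormal
  have hnx : ‖x‖ ≤ 1 := (CStarAlgebra.norm_le_one_iff_of_nonneg x hx0).mpr hx1
  have h1 : ‖(1 : A)‖ ≤ 1 := by
    have h := CStarRing.norm_star_mul_self (x := (1 : A))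
    simp only [star_one, one_mul] at h
    nlinarith [norm_nonneg (1 : A)]
  -- the spectrum of x lives in [0,1] ⊆ ℝ ⊆ ℂ
  have hspec : spectrum ℂ x ⊆ Complex.ofReal '' Set.Icc (0 : ℝ) 1 := by
    intro z hz
    have hz' := hsa.mem_spectrum_eq_re hz
    have hre : (algebraMap ℝ ℂ z.re) ∈ spectrum ℂ x := by
      rw [Complex.coe_algebraMap]; rwa [hz'] at hz
    have hr : z.re ∈ spectrum ℝ x := spectrum.of_algebraMap_mem ℂ hre
    refine ⟨z.re, ⟨spectrum_nonneg_of_nonneg hx0 hr, ?_⟩, hz'.symm⟩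
    have h1x : (0 : A) ≤ 1 - x := sub_nonneg.mpr hx1
    have hmem : (1 : ℝ) - z.re ∈ {(1 : ℝ)} - spectrum ℝ x :=
      Set.sub_mem_sub rfl hr
    rw [spectrum.singleton_sub_eq, map_one] at hmem
    have := spectrum_nonneg_of_nonneg h1x hmem
    linarith
  -- the polynomial approximates f on the spectrum
  have happrox : ∀ z ∈ spectrum ℂ x, ‖f z - q.eval z‖ ≤ ε / 4 := by
    intro z hz
    obtain ⟨r, hr, rfl⟩ := hspec hz
    have e1 : q.eval (r : ℂ) = ((p₁.eval r : ℝ) : ℂ) + Complex.I * ((p₂.eval r : ℝ) : ℂ) := by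
      simp only [hq, Polynomial.eval_add, Polynomial.eval_mul, Polynomial.eval_C,
        Polynomial.eval_map]
      rw [show ((r : ℝ) : ℂ) = algebraMap ℝ ℂ r from rfl,
        Polynomial.eval₂_at_apply, Polynomial.eval₂_at_apply]
      rfl
    have e2 : f r - q.eval (r : ℂ)
        = (((f r).re - p₁.eval r : ℝ) : ℂ) + Complex.I * (((f r).im - p₂.eval r : ℝ) : ℂ) := by
      rw [e1, Complex.ext_iff]
      constructor <;> simp
    calc ‖f ↑r - q.eval (r : ℂ)‖
        ≤ ‖(((f ↑r).re - p₁.eval r : ℝ) : ℂ)‖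
          + ‖Complex.I * (((f ↑r).im - p₂.eval r : ℝ) : ℂ)‖ := by
          rw [e2]; exact norm_add_le _ _
      _ = |(f ↑r).re - p₁.eval r| + |(f ↑r).im - p₂.eval r| := by
          rw [norm_mul, Complex.norm_I, one_mul, Complex.norm_real, Complex.norm_real]
          rfl
      _ ≤ ε / 8 + ε / 8 := by
          rw [abs_sub_comm, abs_sub_comm ((f ↑r).im)]
          exact add_le_add (hp₁ r hr).le (hp₂ r hr).le
      _ = ε / 4 := by ring
  -- compare `cfc f x` with the polynomial `aeval x q`
  have hfx : ContinuousOn f (spectrum ℂ x) := hf.mono hspec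
  have key1 : ‖cfc f x - cfc q.eval x‖ ≤ ε / 4 := by
    rw [← cfc_sub f q.eval x hfx (Polynomial.continuous q).continuousOn]
    exact norm_cfc_le (by positivity) happrox
  have key2 : cfc q.eval x = Polynomial.aeval x q := cfc_polynomial q x
  rw [key2] at key1
  have key3 := comm_aeval_bound q x y hnx h1
  set c := cfc f x with hc
  set P := Polynomial.aeval x q with hP
  have hcomm : ‖P * y - y * P‖ ≤ C * ‖x * y - y * x‖ := key3
  have hsplit : c * y - y * c = (c - P) * y - y * (c - P) + (P * y - y * P) := by
    noncomm_ring
  have hCd : C * ‖x * y - y * x‖ ≤ C * (ε / (2 * (C + 1))) :=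
    mul_le_mul_of_nonneg_left hxy.le hC
  calc ‖c * y - y * c‖
      = ‖(c - P) * y - y * (c - P) + (P * y - y * P)‖ := by rw [hsplit]
    _ ≤ ‖(c - P) * y‖ + ‖y * (c - P)‖ + ‖P * y - y * P‖ :=
        (norm_add_le _ _).trans (add_le_add (norm_sub_le _ _) le_rfl)
    _ ≤ ‖c - P‖ * ‖y‖ + ‖y‖ * ‖c - P‖ + ‖P * y - y * P‖ :=
        add_le_add (add_le_add (norm_mul_le _ _) (norm_mul_le _ _)) le_rfl
    _ ≤ (ε / 4) * 1 + 1 * (ε / 4) + C * (ε / (2 * (C + 1))) := by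
        refine add_le_add (add_le_add ?_ ?_) (hcomm.trans hCd)
        · exact mul_le_mul key1 hy (norm_nonneg _) (by positivity)
        · exact mul_le_mul hy key1 (norm_nonneg _) zero_le_one
    _ < ε := by
        rw [mul_one, one_mul]
        have h2 : C * (ε / (2 * (C + 1))) < ε / 2 := by
          have heq : C * (ε / (2 * (C + 1))) = (C / (C + 1)) * (ε / 2) := by
            rw [mul_div_assoc', div_mul_div_comm]
            ring_nf
          have hlt : C / (C + 1) < 1 := (div_lt_one (by linarith)).mpr (by linarith)
          rw [heq]
          calc (C / (C + 1)) * (ε / 2) < 1 * (ε / 2) :=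
                mul_lt_mul_of_pos_right hlt (by positivity)
            _ = ε / 2 := one_mul _
        linarith
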